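/- The function f is differentiable on ℝ \ {0} and for every real x ≠ 0: 2·f(x) + x·f'(x) = (8·(e^x − e^{−x})/x²) · ∫_0^x (e^t − e^{−t})/t dt. -/

import Mathlib

open MeasureTheory intervalIntegral

noncomputable def auxG : ℝ → ℝ := fun t => (Real.exp t - Real.exp (-t)) / t

lemma auxG_even (t : ℝ) : auxG (-t) = auxG t := by
  simp only [auxG, neg_neg, div_neg, neg_div]
  rw [← neg_div, neg_sub]

lemma auxG_meas : Measurable auxG :=
  (Real.measurable_exp.sub (Real.measurable_exp.comp measurable_neg)).div measurable_id

lemma auxG_bound (t : ℝ) : |auxG t| ≤ 2 * Real.exp |t| := by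
  rcases eq_or_ne t 0 with rfl | ht
  · simp [auxG]
  · have h1 : Real.exp t - Real.exp (-t) = ∫ s in (-t)..t, Real.exp s := by
      rw [integral_exp]
    have h2 : |Real.exp t - Real.exp (-t)| ≤ Real.exp |t| * |t - (-t)| := by
      rw [h1, ← Real.norm_eq_abs, ← Real.norm_eq_abs (t - -t)]
      apply intervalIntegral.norm_integral_le_of_norm_le_const
      intro s hs
      rw [Real.norm_eq_abs, abs_of_pos (Real.exp_pos s)]
      apply Real.exp_le_exp.2
      rcases le_total (-t) t with h | h
      · exact ((Set.uIoc_of_le h ▸ hs).2).trans (le_abs_self t)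
      · exact ((Set.uIoc_of_ge h ▸ hs).2).trans (neg_le_abs t)
    have : |t - (-t)| = 2 * |t| := by rw [sub_neg_eq_add, ← two_mul, abs_mul]; simp
    rw [auxG, abs_div]
    rw [div_le_iff₀ (abs_pos.2 ht)]
    calc |Real.exp t - Real.exp (-t)| ≤ Real.exp |t| * (2 * |t|) := by rw [← this]; exact h2
      _ = 2 * Real.exp |t| * |t| := by ring

lemma auxG_intable (a b : ℝ) : IntervalIntegrable auxG volume a b := by
  rw [intervalIntegrable_iff]
  apply MeasureTheory.Integrable.mono' (g := fun _ => 2 * Real.exp (max |a| |b|))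
    (integrableOn_const measure_Ioc_lt_top.ne)
    auxG_meas.aestronglyMeasurable
  filter_upwards [MeasureTheory.ae_restrict_mem measurableSet_Ioc] with t ht
  rw [Real.norm_eq_abs]
  refine (auxG_bound t).trans ?_
  have habs : |t| ≤ max |a| |b| := by
    rw [abs_le]
    constructor
    · calc -(max |a| |b|) ≤ min a b := by
            apply le_min
            · exact le_trans (neg_le_neg (le_max_left _ _)) (neg_abs_le a)
            · exact le_trans (neg_le_neg (le_max_right _ _)) (neg_abs_le b)
        _ ≤ t := ht.1.le
    · calc t ≤ max a b := ht.2
        _ ≤ max |a| |b| := max_le_max (le_abs_self a) (le_abs_self b)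
  have := Real.exp_le_exp.2 habs
  nlinarith [Real.exp_pos |t|]

lemma auxG_eq (c : ℝ) (hc : c ≠ 0) :
    ∫ w in (-1:ℝ)..1, Real.exp (c * w) = auxG c := by
  rw [intervalIntegral.integral_comp_mul_left (fun u => Real.exp u) hc]
  simp only [mul_neg_one, mul_one, integral_exp, smul_eq_mul]
  rw [auxG, div_eq_inv_mul]

noncomputable def auxS : ℝ → ℝ := fun x => ∫ t in (0:ℝ)..x, auxG t

lemma symm_integral (x : ℝ) : ∫ u in (-x)..x, auxG u = 2 * auxS x := by
  have h1 : ∫ u in (-x)..(0:ℝ), auxG u = auxS x := by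
    have := intervalIntegral.integral_comp_neg (a := (0:ℝ)) (b := x) auxG
    simp only [neg_zero] at this
    rw [← this]
    simp only [auxG_even]
    rfl
  rw [← intervalIntegral.integral_add_adjacent_intervals (b := (0:ℝ))
    (auxG_intable _ _) (auxG_intable _ _), h1, two_mul]
  rfl

lemma EE_int (x : ℝ) (hx : x ≠ 0) :
    ∫ w in (-1:ℝ)..1, (∫ w' in (-1:ℝ)..1, Real.exp ((-(x*w)) * w')) = 2 * auxS x / x := by
  have h0 : ∀ᵐ w : ℝ, w ≠ 0 := by
    rw [MeasureTheory.ae_iff]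
    simp only [ne_eq, not_not]
    exact measure_singleton 0
  have hcongr : ∀ᵐ w : ℝ, w ∈ Set.uIoc (-1:ℝ) 1 →
      (∫ w' in (-1:ℝ)..1, Real.exp ((-(x*w)) * w')) = auxG (x * w) := by
    filter_upwards [h0] with w hw _
    rw [auxG_eq _ (by simp [hx, hw]), auxG_even]
  rw [intervalIntegral.integral_congr_ae hcongr,
    intervalIntegral.integral_comp_mul_left auxG hx]
  simp only [mul_neg_one, mul_one, smul_eq_mul]
  rw [symm_integral, div_eq_inv_mul]

lemma closed_form (x : ℝ) (hx : x ≠ 0) :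
    (∫ w₁ in (-1 : ℝ)..1, ∫ w₂ in (-1 : ℝ)..1, ∫ w₃ in (-1 : ℝ)..1, ∫ w₄ in (-1 : ℝ)..1,
      Real.exp (-x * (w₁ * w₂ + w₃ * w₄))) = 4 * auxS x ^ 2 / x ^ 2 := by
  have step1 : ∀ w₁ w₂ : ℝ,
      (∫ w₃ in (-1:ℝ)..1, ∫ w₄ in (-1:ℝ)..1, Real.exp (-x * (w₁ * w₂ + w₃ * w₄)))
        = Real.exp (-(x * (w₁ * w₂))) * (2 * auxS x / x) := by
    intro w₁ w₂
    have h1 : (∫ w₃ in (-1:ℝ)..1, ∫ w₄ in (-1:ℝ)..1, Real.exp (-x * (w₁ * w₂ + w₃ * w₄)))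
        = ∫ w₃ in (-1:ℝ)..1, Real.exp (-(x * (w₁ * w₂)))
            * ∫ w₄ in (-1:ℝ)..1, Real.exp ((-(x * w₃)) * w₄) := by
      apply intervalIntegral.integral_congr
      intro w₃ _
      simp only []
      rw [← intervalIntegral.integral_const_mul]
      apply intervalIntegral.integral_congr
      intro w₄ _
      show Real.exp (-x * (w₁ * w₂ + w₃ * w₄)) = Real.exp (-(x * (w₁ * w₂))) * Real.exp (-(x * w₃) * w₄)
      rw [← Real.exp_add]
      ring_nf
    rw [h1, intervalIntegral.integral_const_mul, EE_int x hx]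
  have step2 : ∀ w₁ : ℝ,
      (∫ w₂ in (-1:ℝ)..1, ∫ w₃ in (-1:ℝ)..1, ∫ w₄ in (-1:ℝ)..1,
          Real.exp (-x * (w₁ * w₂ + w₃ * w₄)))
        = (∫ w₂ in (-1:ℝ)..1, Real.exp ((-(x * w₁)) * w₂)) * (2 * auxS x / x) := by
    intro w₁
    rw [show (∫ w₂ in (-1:ℝ)..1, ∫ w₃ in (-1:ℝ)..1, ∫ w₄ in (-1:ℝ)..1,
          Real.exp (-x * (w₁ * w₂ + w₃ * w₄)))
        = ∫ w₂ in (-1:ℝ)..1, Real.exp ((-(x * w₁)) * w₂) * (2 * auxS x / x) from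
      intervalIntegral.integral_congr fun w₂ _ => by
        rw [step1 w₁ w₂]; congr 2; ring]
    rw [intervalIntegral.integral_mul_const]
  rw [show (∫ w₁ in (-1 : ℝ)..1, ∫ w₂ in (-1 : ℝ)..1, ∫ w₃ in (-1 : ℝ)..1,
        ∫ w₄ in (-1 : ℝ)..1, Real.exp (-x * (w₁ * w₂ + w₃ * w₄)))
      = ∫ w₁ in (-1:ℝ)..1, (∫ w₂ in (-1:ℝ)..1, Real.exp ((-(x * w₁)) * w₂)) * (2 * auxS x / x)
    from intervalIntegral.integral_congr fun w₁ _ => step2 w₁]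
  rw [intervalIntegral.integral_mul_const, EE_int x hx]
  field_simp
  ring

lemma auxS_hasDeriv (x : ℝ) (hx : x ≠ 0) : HasDerivAt auxS (auxG x) x := by
  apply intervalIntegral.integral_hasDerivAt_right (auxG_intable 0 x)
    auxG_meas.stronglyMeasurable.stronglyMeasurableAtFilter
  have : ContinuousAt (fun t : ℝ => Real.exp t - Real.exp (-t)) x :=
    (Real.continuous_exp.sub (Real.continuous_exp.comp continuous_neg)).continuousAt
  exact this.div continuousAt_id hx

/-- The quadruple integral `f(x) = ∫∫∫∫ exp(-x(w₁w₂ + w₃w₄))` over `[-1,1]⁴` is differentiable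
away from `0` and satisfies the first-order inhomogeneous ODE derived by cmAZIntegrate. -/
theorem quadruple_integral_first_order_ODE
    (f : ℝ → ℝ)
    (hf : ∀ x : ℝ, f x =
      ∫ w₁ in (-1 : ℝ)..1, ∫ w₂ in (-1 : ℝ)..1, ∫ w₃ in (-1 : ℝ)..1, ∫ w₄ in (-1 : ℝ)..1,
        Real.exp (-x * (w₁ * w₂ + w₃ * w₄))) :
    ∀ x : ℝ, x ≠ 0 →
      DifferentiableAt ℝ f x ∧
      2 * f x + x * deriv f x
        = 8 * (Real.exp x - Real.exp (-x)) / x ^ 2 *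
            ∫ t in (0 : ℝ)..x, (Real.exp t - Real.exp (-t)) / t := by
  intro x hx
  have hS := auxS_hasDeriv x hx
  have h1 : HasDerivAt (fun y => 4 * auxS y ^ 2) (4 * (2 * auxS x * auxG x)) x := by
    have := (hS.pow 2).const_mul (4:ℝ)
    simpa using this
  have h2 : HasDerivAt (fun y : ℝ => y ^ 2) (2 * x) x := by
    simpa using hasDerivAt_pow 2 x
  have hF : HasDerivAt (fun y => 4 * auxS y ^ 2 / y ^ 2)
      ((4 * (2 * auxS x * auxG x) * x ^ 2 - 4 * auxS x ^ 2 * (2 * x)) / (x ^ 2) ^ 2) x :=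
    h1.div h2 (pow_ne_zero 2 hx)
  have hev : f =ᶠ[nhds x] (fun y => 4 * auxS y ^ 2 / y ^ 2) := by
    filter_upwards [eventually_ne_nhds hx] with y hy
    rw [hf y, closed_form y hy]
  have hf' : HasDerivAt f
      ((4 * (2 * auxS x * auxG x) * x ^ 2 - 4 * auxS x ^ 2 * (2 * x)) / (x ^ 2) ^ 2) x :=
    hF.congr_of_eventuallyEq hev
  refine ⟨hf'.differentiableAt, ?_⟩
  rw [hf'.deriv, hf x, closed_form x hx]
  show _ = 8 * (Real.exp x - Real.exp (-x)) / x ^ 2 * auxS x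
  rw [auxG]
  field_simp
  ring
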